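/- InqLTL satisfiability reduces to LTL satisfiability: an InqLTL formula φ has a nonempty model under the team semantics if and only if it has a singleton model, that is, there exists a nonempty team L with L ⊨ φ if and only if there exists a trace w with {w} ⊨ φ. -/

import Mathlib

/-- A trace over the set `AP` of atomic propositions. -/
abbrev Trace (AP : Type) := ℕ → Set AP

/-- A team: a set of traces. -/
abbrev Team (AP : Type) := Set (Trace AP)

/-- The suffix `w≥i` of a trace. -/
def Trace.shift {AP : Type} (w : Trace AP) (i : ℕ) : Trace AP := fun j => w (i + j)

/-- The suffix team `L≥i`. -/
def Team.shift {AP : Type} (L : Team AP) (i : ℕ) : Team AP := (fun w => Trace.shift w i) '' L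

/-- InqLTL formulas over `AP`. -/
inductive InqForm (AP : Type) : Type where
  | bot
  | atom (p : AP)
  | or (φ ψ : InqForm AP)
  | and (φ ψ : InqForm AP)
  | imp (φ ψ : InqForm AP)
  | next (φ : InqForm AP)
  | untl (φ ψ : InqForm AP)
  | rel (φ ψ : InqForm AP)

/-- Team satisfaction for InqLTL. -/
def InqForm.sat {AP : Type} : InqForm AP → Team AP → Prop
  | .bot, L => L = ∅
  | .atom p, L => ∀ w ∈ L, p ∈ w 0
  | .or φ ψ, L => φ.sat L ∨ ψ.sat L
  | .and φ ψ, L => φ.sat L ∧ ψ.sat L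
  | .imp φ ψ, L => ∀ L' ⊆ L, φ.sat L' → ψ.sat L'
  | .next φ, L => φ.sat (L.shift 1)
  | .untl φ ψ, L => ∃ i, ψ.sat (L.shift i) ∧ ∀ k < i, φ.sat (L.shift k)
  | .rel φ ψ, L => ∀ i, ψ.sat (L.shift i) ∨ ∃ k < i, φ.sat (L.shift k)


lemma Team.shift_mono {AP : Type} {L L' : Team AP} (h : L' ⊆ L) (i : ℕ) :
    L'.shift i ⊆ L.shift i := Set.image_mono h

lemma InqForm.sat_mono {AP : Type} (φ : InqForm AP) :
    ∀ {L L' : Team AP}, L' ⊆ L → φ.sat L → φ.sat L' := by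
  induction φ with
  | bot => intro L L' h hs
           simp only [InqForm.sat] at *
           subst hs; exact Set.subset_eq_empty h rfl
  | atom p => intro L L' h hs w hw; exact hs w (h hw)
  | or φ ψ ihφ ihψ => intro L L' h hs
                      rcases hs with hs | hs
                      · exact Or.inl (ihφ h hs)
                      · exact Or.inr (ihψ h hs)
  | and φ ψ ihφ ihψ => intro L L' h hs; exact ⟨ihφ h hs.1, ihψ h hs.2⟩
  | imp φ ψ ihφ ihψ => intro L L' h hs L'' h'' hφ; exact hs L'' (h''.trans h) hφ
  | next φ ih => intro L L' h hs; exact ih (Team.shift_mono h 1) hs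
  | untl φ ψ ihφ ihψ =>
      intro L L' h hs
      obtain ⟨i, hi, hk⟩ := hs
      exact ⟨i, ihψ (Team.shift_mono h i) hi, fun k hki => ihφ (Team.shift_mono h k) (hk k hki)⟩
  | rel φ ψ ihφ ihψ =>
      intro L L' h hs i
      rcases hs i with hi | ⟨k, hki, hk⟩
      · exact Or.inl (ihψ (Team.shift_mono h i) hi)
      · exact Or.inr ⟨k, hki, ihφ (Team.shift_mono h k) hk⟩

/-- InqLTL satisfiability reduces to LTL satisfiability: an InqLTL
formula has a nonempty model iff it has a singleton model. -/
theorem inqLTL_sat_iff_singleton_sat {AP : Type} [Fintype AP] (φ : InqForm AP) :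
    (∃ L : Team AP, L.Nonempty ∧ φ.sat L) ↔ (∃ w : Trace AP, φ.sat ({w} : Team AP)) := by
  constructor
  · rintro ⟨L, ⟨w, hw⟩, hs⟩
    exact ⟨w, φ.sat_mono (Set.singleton_subset_iff.mpr hw) hs⟩
  · rintro ⟨w, hs⟩
    exact ⟨{w}, Set.singleton_nonempty w, hs⟩
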